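/- Let c: [0,1] → ℍ³ be a hyperbolic geodesic of constant speed ℓ = |ċ|_h, and define f(t) = 1/z(c(t)), where z is the third coordinate in the upper half-space model. Then f satisfies the linear ODE f''(t) − ℓ² f(t) = 0, so f(t) = a cosh(ℓt) + b sinh(ℓt) for constants a = f(0) and b = f'(0)/ℓ. -/

import Mathlib

noncomputable section

def pd (l : Fin 3) (f : (Fin 3 → ℝ) → ℝ) (p : Fin 3 → ℝ) : ℝ :=
  fderiv ℝ f p (Pi.single l 1)

def hypMetric (p : Fin 3 → ℝ) (i j : Fin 3) : ℝ :=
  if i = j then 1 / (p 2) ^ 2 else 0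

def hypMetricInv (p : Fin 3 → ℝ) (i j : Fin 3) : ℝ :=
  if i = j then (p 2) ^ 2 else 0

def christoffel (k i j : Fin 3) (p : Fin 3 → ℝ) : ℝ :=
  (1 / 2) * ∑ l : Fin 3, hypMetricInv p k l *
    (pd i (fun q => hypMetric q l j) p + pd j (fun q => hypMetric q l i) p
      - pd l (fun q => hypMetric q i j) p)

lemma pd_hypMetric (l i j : Fin 3) (p : Fin 3 → ℝ) (hp : p 2 ≠ 0) :
    pd l (fun q => hypMetric q i j) p =
      if i = j then (if l = 2 then -2 / (p 2) ^ 3 else 0) else 0 := by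
  unfold pd hypMetric
  by_cases hij : i = j
  · simp only [hij, if_true]
    have h2 : (p 2) ^ 2 ≠ 0 := pow_ne_zero _ hp
    have hφ : HasDerivAt (fun x : ℝ => 1 / x ^ 2) (-2 / (p 2) ^ 3) (p 2) := by
      have h := (hasDerivAt_pow 2 (p 2)).fun_inv h2
      simp only [one_div]
      refine h.congr_deriv ?_
      field_simp
      ring
    have hev : HasFDerivAt (fun q : Fin 3 → ℝ => q 2)
        (ContinuousLinearMap.proj 2 : (Fin 3 → ℝ) →L[ℝ] ℝ) p := hasFDerivAt_apply 2 p
    have hcomp : HasFDerivAt (fun q : Fin 3 → ℝ => 1 / q 2 ^ 2)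
        ((-2 / p 2 ^ 3) • (ContinuousLinearMap.proj 2 : (Fin 3 → ℝ) →L[ℝ] ℝ)) p :=
      by have := hφ.comp_hasFDerivAt p hev; exact this
    rw [hcomp.fderiv]
    simp only [ContinuousLinearMap.coe_smul', Pi.smul_apply,
      ContinuousLinearMap.proj_apply, Pi.single_apply, smul_eq_mul]
    by_cases hl : l = 2
    · simp [hl]
    · have : ¬((2 : Fin 3) = l) := fun h => hl h.symm
      simp [hl, this]
  · simp only [hij, if_false]
    simp [fderiv_const]

set_option maxHeartbeats 1000000 in
lemma christoffel2 (i j : Fin 3) (p : Fin 3 → ℝ) (hp : p 2 ≠ 0) :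
    christoffel 2 i j p =
      (if i = j then 1 / p 2 else 0)
        - (if i = 2 then 1 else 0) * (if j = 2 then 1 else 0) * (2 / p 2) := by
  unfold christoffel hypMetricInv
  simp only [pd_hypMetric _ _ _ _ hp, Fin.sum_univ_three]
  fin_cases i <;> fin_cases j <;>
    norm_num [Fin.ext_iff] <;> field_simp <;> ring

/-- `c` is a (constant-speed) geodesic of the hyperbolic metric on upper half-space:
it stays in `{z > 0}`, is `C²`, and satisfies `c̈ᵏ + Γᵏ_{ij} ċⁱ ċʲ = 0`. -/
def IsHypGeodesic (c : ℝ → Fin 3 → ℝ) : Prop :=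
  (∀ t, 0 < c t 2) ∧ ContDiff ℝ 2 c ∧
    ∀ t (k : Fin 3), deriv (fun s => deriv (fun u => c u k) s) t
      + ∑ i, ∑ j, christoffel k i j (c t) * deriv (fun u => c u i) t
          * deriv (fun u => c u j) t = 0

/-- For a hyperbolic geodesic `c` of constant speed `ℓ = |ċ|_h`, the function
`f(t) = 1/z(c(t))` satisfies `f'' − ℓ² f = 0`, whence
`f(t) = f(0) cosh(ℓt) + (f'(0)/ℓ) sinh(ℓt)`. -/
theorem inverse_height_ode (c : ℝ → Fin 3 → ℝ) (ℓ : ℝ)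
    (hgeo : IsHypGeodesic c)
    (hspeed : ∀ t, (∑ i, (deriv (fun u => c u i) t) ^ 2) / (c t 2) ^ 2 = ℓ ^ 2) :
    (∀ t, deriv (deriv fun s => 1 / c s 2) t - ℓ ^ 2 * (1 / c t 2) = 0)
    ∧ (ℓ ≠ 0 → ∀ t, 1 / c t 2 =
        (1 / c 0 2) * Real.cosh (ℓ * t)
          + (deriv (fun s => 1 / c s 2) 0 / ℓ) * Real.sinh (ℓ * t)) := by
  obtain ⟨hpos, hc2, hgeq⟩ := hgeo
  have hzne : ∀ t, c t 2 ≠ 0 := fun t => (hpos t).ne'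
  -- coordinates are C²
  have hci : ∀ i : Fin 3, ContDiff ℝ 2 (fun t => c t i) := fun i =>
    (ContinuousLinearMap.proj i : (Fin 3 → ℝ) →L[ℝ] ℝ).contDiff.comp hc2
  set z' : ℝ → ℝ := deriv (fun t => c t 2) with hz'def
  set z'' : ℝ → ℝ := deriv z' with hz''def
  have hdz : ∀ t, HasDerivAt (fun t => c t 2) (z' t) t := fun t =>
    (((hci 2).differentiable two_ne_zero) t).hasDerivAt
  have hz'diff : Differentiable ℝ z' := by
    have h := (contDiff_succ_iff_deriv.mp (by exact_mod_cast hci 2 : ContDiff ℝ (1 + 1) (fun t => c t 2))).2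
    exact h.2.differentiable one_ne_zero
  have hdz' : ∀ t, HasDerivAt z' (z'' t) t := fun t => (hz'diff t).hasDerivAt
  -- the Christoffel sum
  have hsum : ∀ t, ∑ i, ∑ j, christoffel 2 i j (c t) * deriv (fun u => c u i) t
      * deriv (fun u => c u j) t
      = (∑ i, (deriv (fun u => c u i) t) ^ 2) / c t 2 - 2 * (z' t) ^ 2 / c t 2 := by
    intro t
    simp only [christoffel2 _ _ _ (hzne t), Fin.sum_univ_three]
    norm_num [Fin.ext_iff]
    field_simp
    ring
  -- speed
  have hS : ∀ t, (∑ i, (deriv (fun u => c u i) t) ^ 2) = ℓ ^ 2 * (c t 2) ^ 2 := by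
    intro t
    have h := hspeed t
    rw [div_eq_iff (pow_ne_zero 2 (hzne t))] at h
    exact h
  -- second derivative of z
  have hz'' : ∀ t, z'' t = 2 * (z' t) ^ 2 / c t 2 - ℓ ^ 2 * c t 2 := by
    intro t
    have h := hgeq t 2
    rw [hsum t, hS t] at h
    have hne := hzne t
    have : z'' t = -(ℓ ^ 2 * c t 2 ^ 2 / c t 2 - 2 * z' t ^ 2 / c t 2) := by
      rw [hz''def, hz'def]
      linarith
    rw [this]
    field_simp
    ring
  set f : ℝ → ℝ := fun s => 1 / c s 2 with hfdef
  set f1 : ℝ → ℝ := fun t => -(z' t) / (c t 2) ^ 2 with hf1def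
  have hfd : ∀ t, HasDerivAt f (f1 t) t := by
    intro t
    simpa only [hfdef, hf1def, one_div] using (hdz t).fun_inv (hzne t)
  have hderivf : deriv f = f1 := funext fun t => (hfd t).deriv
  have hfd2 : ∀ t, HasDerivAt f1 (ℓ ^ 2 * f t) t := by
    intro t
    have hsq : HasDerivAt (fun t => (c t 2) ^ 2) (2 * c t 2 ^ 1 * z' t) t := (hdz t).pow 2
    have h := ((hdz' t).fun_neg).fun_div hsq (pow_ne_zero 2 (hzne t))
    refine h.congr_deriv ?_
    rw [hz'' t, hfdef]
    have hne := hzne t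
    field_simp
    ring
  constructor
  · intro t
    rw [hderivf, (hfd2 t).deriv]
    ring
  · intro hℓ t
    set a : ℝ := 1 / c 0 2 with hadef
    set b : ℝ := deriv f 0 / ℓ with hbdef
    set g : ℝ → ℝ := fun t => f t - a * Real.cosh (ℓ * t) - b * Real.sinh (ℓ * t) with hgdef
    set g1 : ℝ → ℝ := fun t => f1 t - a * (Real.sinh (ℓ * t) * ℓ) - b * (Real.cosh (ℓ * t) * ℓ)
      with hg1def
    have hmul : ∀ s : ℝ, HasDerivAt (fun t : ℝ => ℓ * t) ℓ s := fun s => by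
      simpa using (hasDerivAt_id s).const_mul ℓ
    have hcosh : ∀ s : ℝ, HasDerivAt (fun t => Real.cosh (ℓ * t)) (Real.sinh (ℓ * s) * ℓ) s :=
      fun s => (Real.hasDerivAt_cosh (ℓ * s)).comp s (hmul s)
    have hsinh : ∀ s : ℝ, HasDerivAt (fun t => Real.sinh (ℓ * t)) (Real.cosh (ℓ * s) * ℓ) s :=
      fun s => (Real.hasDerivAt_sinh (ℓ * s)).comp s (hmul s)
    have hg : ∀ s, HasDerivAt g (g1 s) s := fun s =>
      ((hfd s).sub ((hcosh s).const_mul a)).sub ((hsinh s).const_mul b)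
    have hg1 : ∀ s, HasDerivAt g1 (ℓ ^ 2 * g s) s := by
      intro s
      have h := ((hfd2 s).sub (((hsinh s).mul_const ℓ).const_mul a)).sub
        (((hcosh s).mul_const ℓ).const_mul b)
      refine h.congr_deriv ?_
      simp only [hgdef]
      ring
    set u : ℝ → ℝ := fun s => g1 s - ℓ * g s with hudef
    have hu : ∀ s, HasDerivAt u (-ℓ * u s) s := by
      intro s
      have h := (hg1 s).sub ((hg s).const_mul ℓ)
      refine h.congr_deriv ?_
      rw [hudef]
      ring
    have hg0 : g 0 = 0 := by
      simp [hgdef, hadef, hfdef]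
    have hg10 : g1 0 = 0 := by
      have h0 : g1 0 = f1 0 - a * (Real.sinh (ℓ * 0) * ℓ) - b * (Real.cosh (ℓ * 0) * ℓ) := rfl
      rw [h0, hbdef, hderivf]
      simp only [mul_zero, Real.sinh_zero, Real.cosh_zero, zero_mul, one_mul]
      field_simp
      ring
    have hu0 : ∀ s, u s = 0 := by
      intro s
      have hE : ∀ s, HasDerivAt (fun t => u t * Real.exp (ℓ * t)) 0 s := by
        intro s
        have hexp : HasDerivAt (fun t => Real.exp (ℓ * t)) (Real.exp (ℓ * s) * ℓ) s :=
          (Real.hasDerivAt_exp (ℓ * s)).comp s (hmul s)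
        have h := (hu s).mul hexp
        refine h.congr_deriv ?_
        ring
      have hconst : u s * Real.exp (ℓ * s) = u 0 * Real.exp (ℓ * 0) :=
        is_const_of_deriv_eq_zero (fun t => (hE t).differentiableAt)
          (fun t => (hE t).deriv) s 0
      have : u 0 = 0 := by rw [hudef]; simp [hg0, hg10]
      rw [this, zero_mul] at hconst
      exact (mul_eq_zero.mp hconst).resolve_right (Real.exp_ne_zero _)
    have hgz : ∀ s, g s = 0 := by
      intro s
      have hgl : ∀ s, HasDerivAt g (ℓ * g s) s := by
        intro s
        have h : g1 s - ℓ * g s = 0 := hu0 s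
        have : g1 s = ℓ * g s := by linarith
        rw [← this]
        exact hg s
      have hF : ∀ s, HasDerivAt (fun t => g t * Real.exp (-(ℓ * t))) 0 s := by
        intro s
        have hexp : HasDerivAt (fun t => Real.exp (-(ℓ * t))) (Real.exp (-(ℓ * s)) * -ℓ) s := by
          have h1 : HasDerivAt (fun t : ℝ => -(ℓ * t)) (-ℓ) s := (hmul s).neg
          exact (Real.hasDerivAt_exp (-(ℓ * s))).comp s h1
        have h := (hgl s).mul hexp
        refine h.congr_deriv ?_
        ring
      have hconst : g s * Real.exp (-(ℓ * s)) = g 0 * Real.exp (-(ℓ * 0)) :=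
        is_const_of_deriv_eq_zero (fun t => (hF t).differentiableAt)
          (fun t => (hF t).deriv) s 0
      rw [hg0, zero_mul] at hconst
      exact (mul_eq_zero.mp hconst).resolve_right (Real.exp_ne_zero _)
    have h : f t - a * Real.cosh (ℓ * t) - b * Real.sinh (ℓ * t) = 0 := hgz t
    have hft : f t = 1 / c t 2 := rfl
    linarith
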